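/- The extended effect algebra obtained from an effect algebra by totalizing ⊕ (setting a ⊞ b = 1 when a ⊕ b is undefined) preserves the effect-algebra order: a ≤ b in the effect algebra (i.e., there exists c with a ⊕ c = b) if and only if a ≤ b in the resulting QMV structure (i.e., a = a ⊓ b where a⊓b = (a⊞b')⊙b and a⊙b = (a'⊞b')'). -/
import Mathlib


/-- An effect algebra, with a partial sum modelled via `Option`. -/
class EffectAlg (P : Type*) where
  zero : P
  one : P
  padd : P → P → Option P
  zero_ne_one : zero ≠ one
  /-- (E1) commutativity. -/
  padd_comm : ∀ a b : P, padd a b = padd b a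
  /-- (E2) associativity where defined. -/
  padd_assoc : ∀ a b c bc s : P, padd b c = some bc → padd a bc = some s →
    ∃ ab : P, padd a b = some ab ∧ padd ab c = some s
  /-- (E3) orthosupplement. -/
  cpl : P → P
  padd_cpl : ∀ a : P, padd a (cpl a) = some one
  cpl_unique : ∀ a b : P, padd a b = some one → b = cpl a
  /-- (E4) zero-one law. -/
  one_law : ∀ a b : P, padd one a = some b → a = zero

namespace EffectAlg
variable {P : Type*} [EffectAlg P]
/-- The totalized sum: a ⊞ b = a ⊕ b if defined, 1 otherwise. -/
def bplus (a b : P) : P := (padd a b).getD one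
/-- a ⊙ b = (a' ⊞ b')'. -/
def odot (a b : P) : P := cpl (bplus (cpl a) (cpl b))
/-- a ⊓ b = (a ⊞ b') ⊙ b. -/
def scap (a b : P) : P := odot (bplus a (cpl b)) b
end EffectAlg

namespace EffectAlg
variable {P : Type*} [EffectAlg P]

lemma cpl_cpl (a : P) : cpl (cpl a) = a := by
  have h2 : padd (cpl a) a = some one := by rw [padd_comm]; exact padd_cpl a
  exact (cpl_unique _ _ h2).symm

lemma cpl_one : (cpl one : P) = zero := one_law _ _ (padd_cpl one)

lemma cpl_zero : (cpl zero : P) = one := by rw [← cpl_one, cpl_cpl]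

lemma padd_zero (a : P) : padd zero a = some a := by
  have h1 : padd a (cpl a) = some one := padd_cpl a
  have h2 : padd (zero : P) one = some one := by
    have := padd_cpl (zero : P); rwa [cpl_zero] at this
  obtain ⟨ab, hab, hab2⟩ := padd_assoc zero a (cpl a) one one h1 h2
  have h3 : cpl a = cpl ab := cpl_unique _ _ hab2
  have h4 : ab = a := by rw [← cpl_cpl ab, ← h3, cpl_cpl]
  rwa [h4] at hab

end EffectAlg

/-- The extended effect algebra preserves the effect-algebra order:
a ≤ b (∃ c, a ⊕ c = b) iff a = a ⊓ b in the QMV structure. -/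
theorem extended_effect_preserves_order {P : Type*} [EffectAlg P] :
    ∀ a b : P, (∃ c : P, EffectAlg.padd a c = some b) ↔ a = EffectAlg.scap a b := by
  open EffectAlg in
  intro a b
  constructor
  · rintro ⟨c, h⟩
    have hb : padd (cpl b) b = some one := by rw [padd_comm]; exact padd_cpl b
    obtain ⟨x, hx, hx1⟩ := padd_assoc (cpl b) a c b one h hb
    have hcx : c = cpl x := cpl_unique _ _ hx1
    have hax : padd a (cpl b) = some x := by rw [padd_comm]; exact hx
    have hca : padd c a = some b := by rw [padd_comm]; exact h
    obtain ⟨y, hy, hy1⟩ := padd_assoc (cpl b) c a b one hca hb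
    have hay : a = cpl y := cpl_unique _ _ hy1
    have hcy : padd c (cpl b) = some y := by rw [padd_comm]; exact hy
    simp only [scap, odot, bplus, hax, Option.getD_some, ← hcx, hcy]
    exact hay
  · intro h
    rcases hd : padd a (cpl b) with _ | d
    · simp only [scap, odot, bplus, hd, Option.getD_none, cpl_one, padd_zero,
        Option.getD_some, cpl_cpl] at h
      exact ⟨zero, by rw [h, padd_comm]; exact padd_zero b⟩
    · rcases he : padd (cpl d) (cpl b) with _ | e
      · simp only [scap, odot, bplus, hd, he, Option.getD_none, Option.getD_some,
          cpl_one] at h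
        exact ⟨b, by rw [h]; exact padd_zero b⟩
      · simp only [scap, odot, bplus, hd, he, Option.getD_some] at h
        have hae : padd a e = some one := by
          rw [h, padd_comm]; exact padd_cpl e
        obtain ⟨x, hx, hx1⟩ := padd_assoc a (cpl d) (cpl b) e one he hae
        have hbx : cpl b = cpl x := cpl_unique _ _ hx1
        have : b = x := by rw [← cpl_cpl b, hbx, cpl_cpl]
        exact ⟨cpl d, this ▸ hx⟩
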